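/- Let 0 < Γ ≤ Γ′, let W₁, W₂, W₄ > 0 with W₁ ≠ W₂, and let θ ∈ (0,1). Let γ_SR, γ_SD, γ_RD, T be independent random variables where γ_SR, γ_SD, γ_RD are exponential with rates W₄, W₂, W₁ respectively and T is Bernoulli with P(T = 1) = θ. Then P({γ_SD < Γ′} ∩ {min(γ_SR, T·γ_RD + γ_SD) < Γ}) = (1 − e^{−W₄ Γ})(1 − e^{−W₂ Γ′}) + e^{−W₄ Γ}·[ θ·( (1 − e^{−W₂ Γ}) + W₂(e^{−W₁ Γ} − e^{−W₂ Γ})/(W₁ − W₂) ) + (1 − θ)·(1 − e^{−W₂ Γ}) ]. -/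

import Mathlib

open Real MeasureTheory ProbabilityTheory

lemma my_expMeasure_Iio {r : ℝ} (hr : 0 < r) (x : ℝ) :
    expMeasure r (Set.Iio x) = ENNReal.ofReal (if 0 ≤ x then 1 - Real.exp (-(r*x)) else 0) := by
  rw [expMeasure, gammaMeasure, withDensity_apply _ measurableSet_Iio,
    setLIntegral_congr Iio_ae_eq_Iic]
  exact lintegral_exponentialPDF_eq_antiDeriv hr x

lemma my_integral_exp_mul {c : ℝ} (hc : c ≠ 0) (a b : ℝ) :
    ∫ x in a..b, Real.exp (c * x) = (Real.exp (c * b) - Real.exp (c * a)) / c := by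
  have h : ∀ x, HasDerivAt (fun y => Real.exp (c * y) / c) (Real.exp (c * x)) x := by
    intro x
    have := ((hasDerivAt_id x).const_mul c).exp.div_const c
    simpa [mul_comm, mul_div_cancel_left₀ _ hc] using this
  rw [intervalIntegral.integral_eq_sub_of_hasDerivAt (fun x _ => h x)
    (Continuous.intervalIntegrable (by continuity) a b)]
  ring

lemma my_conv_integral {W1 W2 Γ : ℝ} (hW1 : 0 < W1) (hW2 : 0 < W2) (hne : W1 ≠ W2) (hΓ : 0 < Γ) :
    ∫ x in (0:ℝ)..Γ, W2 * Real.exp (-(W2 * x)) * (1 - Real.exp (-(W1 * (Γ - x))))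
      = (1 - Real.exp (-(W2*Γ))) + W2 * (Real.exp (-(W1*Γ)) - Real.exp (-(W2*Γ))) / (W1 - W2) := by
  have hsub : W1 - W2 ≠ 0 := sub_ne_zero.mpr hne
  have heq : ∀ x : ℝ, W2 * Real.exp (-(W2 * x)) * (1 - Real.exp (-(W1 * (Γ - x))))
      = W2 * Real.exp (-W2 * x) - (W2 * Real.exp (-(W1*Γ))) * Real.exp ((W1 - W2) * x) := by
    intro x
    have : Real.exp (-(W2 * x)) * Real.exp (-(W1 * (Γ - x)))
        = Real.exp (-(W1*Γ)) * Real.exp ((W1 - W2) * x) := by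
      rw [← Real.exp_add, ← Real.exp_add]; ring_nf
    ring_nf
    ring_nf at this
    nlinarith [this]
  rw [intervalIntegral.integral_congr (g := fun x => W2 * Real.exp (-W2 * x)
      - (W2 * Real.exp (-(W1*Γ))) * Real.exp ((W1 - W2) * x)) (fun x _ => heq x)]
  rw [intervalIntegral.integral_sub
      ((Continuous.intervalIntegrable (by continuity) 0 Γ))
      ((Continuous.intervalIntegrable (by continuity) 0 Γ)),
    intervalIntegral.integral_const_mul, intervalIntegral.integral_const_mul,
    my_integral_exp_mul (by linarith : (-W2 : ℝ) ≠ 0),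
    my_integral_exp_mul hsub]
  have e1 : Real.exp (-(W1*Γ)) * Real.exp ((W1 - W2) * Γ) = Real.exp (-(W2*Γ)) := by
    rw [← Real.exp_add]; ring_nf
  have hW2' : (W2:ℝ) ≠ 0 := ne_of_gt hW2
  have hW2n : (-W2:ℝ) ≠ 0 := neg_ne_zero.mpr hW2'
  simp only [mul_zero, Real.exp_zero, neg_mul]
  have e1' : Real.exp (-(Γ*W1)) * Real.exp (Γ*(W1 - W2)) = Real.exp (-(W2*Γ)) := by
    rw [← Real.exp_add]; ring_nf
  field_simp
  linear_combination (-W2) * e1'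

lemma my_conv_prob {W1 W2 Γ : ℝ} (hW1 : 0 < W1) (hW2 : 0 < W2) (hne : W1 ≠ W2) (hΓ : 0 < Γ) :
    ((expMeasure W2).prod (expMeasure W1)) {p : ℝ × ℝ | p.1 + p.2 < Γ}
      = ENNReal.ofReal ((1 - Real.exp (-(W2*Γ)))
          + W2 * (Real.exp (-(W1*Γ)) - Real.exp (-(W2*Γ))) / (W1 - W2)) := by
  have hs : MeasurableSet {p : ℝ × ℝ | p.1 + p.2 < Γ} :=
    measurableSet_lt (measurable_fst.add measurable_snd) measurable_const
  have := isProbabilityMeasure_expMeasure hW1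
  rw [Measure.prod_apply hs]
  have hmk : ∀ x : ℝ, (Prod.mk x ⁻¹' {p : ℝ × ℝ | p.1 + p.2 < Γ}) = Set.Iio (Γ - x) := by
    intro x; ext y; simp only [Set.mem_preimage, Set.mem_setOf_eq, Set.mem_Iio]
    constructor <;> intro h <;> linarith
  simp_rw [hmk, my_expMeasure_Iio hW1]
  set g : ℝ → ℝ := fun x => W2 * Real.exp (-(W2 * x)) * (1 - Real.exp (-(W1 * (Γ - x)))) with hg
  have hgc : Continuous g := by continuity
  have hind : ∀ x, 0 ≤ (Set.Icc (0:ℝ) Γ).indicator g x := by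
    intro x
    by_cases hx : x ∈ Set.Icc (0:ℝ) Γ
    · rw [Set.indicator_of_mem hx]
      refine mul_nonneg (mul_nonneg hW2.le (Real.exp_pos _).le) ?_
      simp only [sub_nonneg, Real.exp_le_one_iff, Left.neg_nonpos_iff]
      exact mul_nonneg hW1.le (by linarith [hx.2])
    · rw [Set.indicator_of_notMem hx]
  have hpt : ∀ x : ℝ, exponentialPDF W2 x
        * ENNReal.ofReal (if 0 ≤ Γ - x then 1 - Real.exp (-(W1 * (Γ - x))) else 0)
      = ENNReal.ofReal ((Set.Icc (0:ℝ) Γ).indicator g x) := by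
    intro x
    rcases lt_or_ge x 0 with hx | hx
    · rw [exponentialPDF_of_neg hx, zero_mul,
        Set.indicator_of_notMem (by simp only [Set.mem_Icc, not_and_or]; left; linarith),
        ENNReal.ofReal_zero]
    · rw [exponentialPDF_of_nonneg hx]
      rcases le_or_gt x Γ with hxΓ | hxΓ
      · rw [if_pos (by linarith), Set.indicator_of_mem (Set.mem_Icc.mpr ⟨hx, hxΓ⟩),
          ← ENNReal.ofReal_mul (mul_nonneg hW2.le (Real.exp_pos _).le)]
      · rw [if_neg (by linarith),
          Set.indicator_of_notMem (by simp only [Set.mem_Icc, not_and_or]; right; linarith),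
          ENNReal.ofReal_zero, mul_zero]
  have hpdf : gammaPDF 1 W2 = exponentialPDF W2 := rfl
  have hmpdf : Measurable (exponentialPDF W2) := (measurable_exponentialPDFReal W2).ennreal_ofReal
  rw [expMeasure, gammaMeasure, hpdf,
    lintegral_withDensity_eq_lintegral_mul volume hmpdf
      (show Measurable fun x : ℝ =>
          ENNReal.ofReal (if 0 ≤ Γ - x then 1 - Real.exp (-(W1 * (Γ - x))) else 0) by
        refine Measurable.ennreal_ofReal (Measurable.ite ?_ ?_ measurable_const)
        · exact measurableSet_le measurable_const (measurable_const.sub measurable_id)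
        · exact measurable_const.sub
            (((measurable_const.sub measurable_id).const_mul W1).neg.exp))]
  have hco : ∀ x : ℝ, (exponentialPDF W2 * fun x => ENNReal.ofReal
        (if 0 ≤ Γ - x then 1 - Real.exp (-(W1 * (Γ - x))) else 0)) x
      = ENNReal.ofReal ((Set.Icc (0:ℝ) Γ).indicator g x) := hpt
  rw [lintegral_congr hco,
    ← ofReal_integral_eq_lintegral_ofReal
      ((hgc.integrableOn_Icc).integrable_indicator measurableSet_Icc)
      (ae_of_all _ hind),
    integral_indicator measurableSet_Icc, integral_Icc_eq_integral_Ioc,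
    ← intervalIntegral.integral_of_le hΓ.le, my_conv_integral hW1 hW2 hne hΓ]



/-- Outage probability of the HSU architecture with the incremental on-off policy
in the stable-buffer case (Eq. (23)): the relay transmits (`T = 1`, probability
`θ = 1/φ`) with relayed SNR `γ_RD`, and is silent (`T = 0`) otherwise. -/
theorem stmt15 {Ω : Type*} [MeasurableSpace Ω] (P : Measure Ω) [IsProbabilityMeasure P]
    (Γ Γ' W1 W2 W4 θ : ℝ)
    (hΓ : 0 < Γ) (hΓΓ' : Γ ≤ Γ')
    (hW1 : 0 < W1) (hW2 : 0 < W2) (hW4 : 0 < W4) (hne : W1 ≠ W2)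
    (hθ0 : 0 < θ) (hθ1 : θ < 1)
    (γSR γSD γRD T : Ω → ℝ)
    (hmSR : Measurable γSR) (hmSD : Measurable γSD)
    (hmRD : Measurable γRD) (hmT : Measurable T)
    (hindep : iIndepFun
      ![γSR, γSD, γRD, T] P)
    (hdSR : Measure.map γSR P = expMeasure W4)
    (hdSD : Measure.map γSD P = expMeasure W2)
    (hdRD : Measure.map γRD P = expMeasure W1)
    (hdT : Measure.map T P
      = ENNReal.ofReal (1 - θ) • Measure.dirac (0 : ℝ)
        + ENNReal.ofReal θ • Measure.dirac (1 : ℝ)) :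
    (P ({ω | γSD ω < Γ'} ∩ {ω | min (γSR ω) (T ω * γRD ω + γSD ω) < Γ})).toReal
      = (1 - Real.exp (-W4 * Γ)) * (1 - Real.exp (-W2 * Γ'))
        + Real.exp (-W4 * Γ) *
          (θ * ((1 - Real.exp (-W2 * Γ))
              + W2 * (Real.exp (-W1 * Γ) - Real.exp (-W2 * Γ)) / (W1 - W2))
            + (1 - θ) * (1 - Real.exp (-W2 * Γ))) := by
  have hm : ∀ i, Measurable (![γSR, γSD, γRD, T] i) := by
    intro i; fin_cases i <;> assumption
  have hi01 : IndepFun γSD γSR P := hindep.indepFun (show (1:Fin 4) ≠ 0 by decide)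
  have hi03 : IndepFun γSR T P := hindep.indepFun (show (0:Fin 4) ≠ 3 by decide)
  have hi12 : IndepFun γSD γRD P := hindep.indepFun (show (1:Fin 4) ≠ 2 by decide)
  have hpair_ind : IndepFun (fun ω => (γSR ω, T ω)) (fun ω => (γSD ω, γRD ω)) P :=
    hindep.indepFun_prodMk_prodMk hm 0 3 1 2 (by decide) (by decide) (by decide) (by decide)
  -- marginals
  have hexple : ∀ {r x : ℝ}, 0 < r → 0 ≤ x → Real.exp (-(r*x)) ≤ 1 := by
    intro r x hr hx
    rw [Real.exp_le_one_iff]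
    simp only [Left.neg_nonpos_iff]
    exact mul_nonneg hr.le hx
  have hB : P (γSR ⁻¹' Set.Iio Γ) = ENNReal.ofReal (1 - Real.exp (-(W4*Γ))) := by
    rw [← Measure.map_apply hmSR measurableSet_Iio, hdSR, my_expMeasure_Iio hW4, if_pos hΓ.le]
  have hBc : P (γSR ⁻¹' Set.Ici Γ) = ENNReal.ofReal (Real.exp (-(W4*Γ))) := by
    rw [show Set.Ici Γ = (Set.Iio Γ)ᶜ from Set.compl_Iio.symm, Set.preimage_compl,
      measure_compl (hmSR measurableSet_Iio) (measure_ne_top P _), measure_univ, hB,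
      ← ENNReal.ofReal_one, ← ENNReal.ofReal_sub _ (by linarith [hexple hW4 hΓ.le])]
    norm_num
  have hD : P (γSD ⁻¹' Set.Iio Γ') = ENNReal.ofReal (1 - Real.exp (-(W2*Γ'))) := by
    rw [← Measure.map_apply hmSD measurableSet_Iio, hdSD, my_expMeasure_Iio hW2,
      if_pos (by linarith)]
  have hDΓ : P (γSD ⁻¹' Set.Iio Γ) = ENNReal.ofReal (1 - Real.exp (-(W2*Γ))) := by
    rw [← Measure.map_apply hmSD measurableSet_Iio, hdSD, my_expMeasure_Iio hW2, if_pos hΓ.le]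
  have hT0 : P (T ⁻¹' {(0:ℝ)}) = ENNReal.ofReal (1 - θ) := by
    rw [← Measure.map_apply hmT (measurableSet_singleton 0), hdT]
    simp [Measure.dirac_apply' _ (measurableSet_singleton (0:ℝ))]
  have hT1 : P (T ⁻¹' {(1:ℝ)}) = ENNReal.ofReal θ := by
    rw [← Measure.map_apply hmT (measurableSet_singleton 1), hdT]
    simp [Measure.dirac_apply' _ (measurableSet_singleton (1:ℝ))]
  -- a.e. facts
  have hRD0 : P (γRD ⁻¹' Set.Iio 0) = 0 := by
    rw [← Measure.map_apply hmRD measurableSet_Iio, hdRD, my_expMeasure_Iio hW1]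
    simp
  have hTae : P (T ⁻¹' ({0, 1} : Set ℝ)ᶜ) = 0 := by
    rw [← Measure.map_apply hmT
      (((measurableSet_singleton (1:ℝ)).insert 0).compl), hdT]
    simp [Measure.dirac_apply' _ (((measurableSet_singleton (1:ℝ)).insert 0).compl)]
  have hG : P {ω | ¬ (0 ≤ γRD ω ∧ (T ω = 0 ∨ T ω = 1))} = 0 := by
    refine measure_mono_null ?_ (measure_union_null hRD0 hTae)
    intro ω hω
    simp only [Set.mem_setOf_eq, not_and_or, not_or] at hω
    rcases hω with h | h
    · exact Or.inl (by simpa [Set.mem_preimage] using lt_of_not_ge h)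
    · exact Or.inr (by simp [Set.mem_preimage, Set.mem_compl_iff]; tauto)
  -- convolution probability
  have hpair2m : Measurable fun ω => (γSD ω, γRD ω) := hmSD.prodMk hmRD
  have hs : MeasurableSet {p : ℝ × ℝ | p.1 + p.2 < Γ} :=
    measurableSet_lt (measurable_fst.add measurable_snd) measurable_const
  have hconv : P ((fun ω => (γSD ω, γRD ω)) ⁻¹' {p : ℝ × ℝ | p.1 + p.2 < Γ})
      = ENNReal.ofReal ((1 - Real.exp (-(W2*Γ)))
          + W2 * (Real.exp (-(W1*Γ)) - Real.exp (-(W2*Γ))) / (W1 - W2)) := by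
    rw [← Measure.map_apply hpair2m hs,
      (indepFun_iff_map_prod_eq_prod_map_map hmSD.aemeasurable hmRD.aemeasurable).mp hi12,
      hdSD, hdRD, my_conv_prob hW1 hW2 hne hΓ]
  -- event decomposition
  have hGae : ∀ᵐ ω ∂P, 0 ≤ γRD ω ∧ (T ω = 0 ∨ T ω = 1) := by
    rw [ae_iff]; exact hG
  have hAU : P ({ω | γSD ω < Γ'} ∩ {ω | min (γSR ω) (T ω * γRD ω + γSD ω) < Γ})
      = P ((γSD ⁻¹' Set.Iio Γ' ∩ γSR ⁻¹' Set.Iio Γ)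
          ∪ ((γSR ⁻¹' Set.Ici Γ ∩ T ⁻¹' {0} ∩ γSD ⁻¹' Set.Iio Γ)
            ∪ (γSR ⁻¹' Set.Ici Γ ∩ T ⁻¹' {1}
                ∩ (fun ω => (γSD ω, γRD ω)) ⁻¹' {p : ℝ × ℝ | p.1 + p.2 < Γ}))) := by
    apply measure_congr
    rw [Filter.eventuallyEq_set]
    filter_upwards [hGae] with ω hω
    obtain ⟨hrd, ht⟩ := hω
    simp only [Set.mem_inter_iff, Set.mem_union, Set.mem_setOf_eq, Set.mem_preimage,
      Set.mem_Iio, Set.mem_Ici, Set.mem_singleton_iff, min_lt_iff]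
    constructor
    · rintro ⟨hsd, h | h⟩
      · exact Or.inl ⟨hsd, h⟩
      · rcases lt_or_ge (γSR ω) Γ with h' | h'
        · exact Or.inl ⟨hsd, h'⟩
        · rcases ht with ht | ht
          · refine Or.inr (Or.inl ⟨⟨h', ht⟩, ?_⟩)
            rw [ht, zero_mul, zero_add] at h; exact h
          · refine Or.inr (Or.inr ⟨⟨h', ht⟩, ?_⟩)
            rw [ht, one_mul] at h
            show γSD ω + γRD ω < Γ
            linarith
    · rintro (⟨hsd, hsr⟩ | ⟨⟨hsr, ht0⟩, hγ⟩ | ⟨⟨hsr, ht1⟩, hγ⟩)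
      · exact ⟨hsd, Or.inl hsr⟩
      · exact ⟨lt_of_lt_of_le hγ hΓΓ', Or.inr (by rw [ht0, zero_mul, zero_add]; exact hγ)⟩
      · have hγ' : γSD ω + γRD ω < Γ := hγ
        exact ⟨by linarith, Or.inr (by rw [ht1, one_mul]; linarith)⟩
  -- measurability and disjointness
  have hmE0 : MeasurableSet (γSR ⁻¹' Set.Ici Γ ∩ T ⁻¹' {0} ∩ γSD ⁻¹' Set.Iio Γ) :=
    ((hmSR measurableSet_Ici).inter (hmT (measurableSet_singleton 0))).inter
      (hmSD measurableSet_Iio)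
  have hmE1 : MeasurableSet (γSR ⁻¹' Set.Ici Γ ∩ T ⁻¹' {1}
      ∩ (fun ω => (γSD ω, γRD ω)) ⁻¹' {p : ℝ × ℝ | p.1 + p.2 < Γ}) :=
    ((hmSR measurableSet_Ici).inter (hmT (measurableSet_singleton 1))).inter (hpair2m hs)
  have hdisjE : Disjoint (γSR ⁻¹' Set.Ici Γ ∩ T ⁻¹' {0} ∩ γSD ⁻¹' Set.Iio Γ)
      (γSR ⁻¹' Set.Ici Γ ∩ T ⁻¹' {1}
        ∩ (fun ω => (γSD ω, γRD ω)) ⁻¹' {p : ℝ × ℝ | p.1 + p.2 < Γ}) := by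
    rw [Set.disjoint_left]
    rintro ω ⟨⟨-, h0⟩, -⟩ ⟨⟨-, h1⟩, -⟩
    simp only [Set.mem_preimage, Set.mem_singleton_iff] at h0 h1
    rw [h0] at h1; norm_num at h1
  have hdisj : Disjoint (γSD ⁻¹' Set.Iio Γ' ∩ γSR ⁻¹' Set.Iio Γ)
      ((γSR ⁻¹' Set.Ici Γ ∩ T ⁻¹' {0} ∩ γSD ⁻¹' Set.Iio Γ)
        ∪ (γSR ⁻¹' Set.Ici Γ ∩ T ⁻¹' {1}
            ∩ (fun ω => (γSD ω, γRD ω)) ⁻¹' {p : ℝ × ℝ | p.1 + p.2 < Γ})) := by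
    rw [Set.disjoint_left]
    rintro ω ⟨-, hb⟩ (⟨⟨hc, -⟩, -⟩ | ⟨⟨hc, -⟩, -⟩) <;>
      · simp only [Set.mem_preimage, Set.mem_Iio, Set.mem_Ici] at hb hc
        linarith
  -- products
  have hPDB : P (γSD ⁻¹' Set.Iio Γ' ∩ γSR ⁻¹' Set.Iio Γ)
      = P (γSD ⁻¹' Set.Iio Γ') * P (γSR ⁻¹' Set.Iio Γ) :=
    hi01.measure_inter_preimage_eq_mul _ _ measurableSet_Iio measurableSet_Iio
  have hPE0 : P (γSR ⁻¹' Set.Ici Γ ∩ T ⁻¹' {0} ∩ γSD ⁻¹' Set.Iio Γ)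
      = (P (γSR ⁻¹' Set.Ici Γ) * P (T ⁻¹' {0})) * P (γSD ⁻¹' Set.Iio Γ) := by
    have h1 := hpair_ind.measure_inter_preimage_eq_mul (Set.Ici Γ ×ˢ {0})
      (Set.Iio Γ ×ˢ Set.univ) (measurableSet_Ici.prod (measurableSet_singleton 0))
      (measurableSet_Iio.prod MeasurableSet.univ)
    have h2 := hi03.measure_inter_preimage_eq_mul (Set.Ici Γ) {0}
      measurableSet_Ici (measurableSet_singleton 0)
    simp only [Set.mk_preimage_prod, Set.preimage_univ, Set.inter_univ] at h1
    rw [h1, h2]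
  have hPE1 : P (γSR ⁻¹' Set.Ici Γ ∩ T ⁻¹' {1}
        ∩ (fun ω => (γSD ω, γRD ω)) ⁻¹' {p : ℝ × ℝ | p.1 + p.2 < Γ})
      = (P (γSR ⁻¹' Set.Ici Γ) * P (T ⁻¹' {1}))
        * P ((fun ω => (γSD ω, γRD ω)) ⁻¹' {p : ℝ × ℝ | p.1 + p.2 < Γ}) := by
    have h1 := hpair_ind.measure_inter_preimage_eq_mul (Set.Ici Γ ×ˢ {1})
      {p : ℝ × ℝ | p.1 + p.2 < Γ} (measurableSet_Ici.prod (measurableSet_singleton 1)) hs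
    have h2 := hi03.measure_inter_preimage_eq_mul (Set.Ici Γ) {1}
      measurableSet_Ici (measurableSet_singleton 1)
    simp only [Set.mk_preimage_prod] at h1
    rw [h1, h2]
  -- nonnegativity facts
  have hv : 0 ≤ (1 - Real.exp (-(W2*Γ)))
      + W2 * (Real.exp (-(W1*Γ)) - Real.exp (-(W2*Γ))) / (W1 - W2) := by
    rw [← my_conv_integral hW1 hW2 hne hΓ]
    apply intervalIntegral.integral_nonneg hΓ.le
    intro u hu
    refine mul_nonneg (mul_nonneg hW2.le (Real.exp_pos _).le) ?_
    simp only [sub_nonneg, Real.exp_le_one_iff, Left.neg_nonpos_iff]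
    exact mul_nonneg hW1.le (by linarith [hu.2])
  have he4 : 0 ≤ Real.exp (-(W4*Γ)) := (Real.exp_pos _).le
  have h1e2' : 0 ≤ 1 - Real.exp (-(W2*Γ')) := by
    linarith [hexple hW2 (le_trans hΓ.le hΓΓ')]
  have h1e4 : 0 ≤ 1 - Real.exp (-(W4*Γ)) := by linarith [hexple hW4 hΓ.le]
  have h1e2 : 0 ≤ 1 - Real.exp (-(W2*Γ)) := by linarith [hexple hW2 hΓ.le]
  have h1θ : 0 ≤ 1 - θ := by linarith
  -- final computation
  have main : (P ({ω | γSD ω < Γ'} ∩ {ω | min (γSR ω) (T ω * γRD ω + γSD ω) < Γ})).toReal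
      = (1 - Real.exp (-W4 * Γ)) * (1 - Real.exp (-W2 * Γ'))
        + Real.exp (-W4 * Γ) *
          (θ * ((1 - Real.exp (-W2 * Γ))
              + W2 * (Real.exp (-W1 * Γ) - Real.exp (-W2 * Γ)) / (W1 - W2))
            + (1 - θ) * (1 - Real.exp (-W2 * Γ))) := by
    rw [hAU, measure_union hdisj (hmE0.union hmE1), measure_union hdisjE hmE1, hPDB, hPE0, hPE1,
      hD, hB, hBc, hT0, hT1, hDΓ, hconv,
      ← ENNReal.ofReal_mul h1e2',
      ← ENNReal.ofReal_mul he4, ← ENNReal.ofReal_mul (mul_nonneg he4 h1θ),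
      ← ENNReal.ofReal_mul he4, ← ENNReal.ofReal_mul (mul_nonneg he4 hθ0.le),
      ← ENNReal.ofReal_add (mul_nonneg (mul_nonneg he4 h1θ) h1e2)
        (mul_nonneg (mul_nonneg he4 hθ0.le) hv),
      ← ENNReal.ofReal_add (mul_nonneg h1e2' h1e4)
        (add_nonneg (mul_nonneg (mul_nonneg he4 h1θ) h1e2)
          (mul_nonneg (mul_nonneg he4 hθ0.le) hv)),
      ENNReal.toReal_ofReal (add_nonneg (mul_nonneg h1e2' h1e4)
        (add_nonneg (mul_nonneg (mul_nonneg he4 h1θ) h1e2)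
          (mul_nonneg (mul_nonneg he4 hθ0.le) hv)))]
    simp only [neg_mul]
    ring
  exact main
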